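/- Let B > 0, let ε ∈ {−1,+1}, and let ρ > 0 satisfy cos ρ ≠ 0 and e^{ρ} = −(1 + ε·sin ρ)/cos ρ. Define a₁ = (1/√B)·ε/(e^{ρ}+ε), a₂ = (1/√B)·1/(1+ε·e^{−ρ}), a₃ = −1/√B, a₄ = (1/√B)·(1−ε·e^{−ρ})/(1+ε·e^{−ρ}), and set φ(ξ) = a₁e^{ρξ/B} + a₂e^{−ρξ/B} + a₃cos(ρξ/B) + a₄sin(ρξ/B) and ψ(ξ) = a₁e^{ρξ/B} + a₂e^{−ρξ/B} − a₃cos(ρξ/B) − a₄sin(ρξ/B). Then for every ξ ∈ [0,B], ∫₀^B max(x−ξ,0)·φ(x) dx = (B/ρ)²·ψ(ξ); that is, γφ = λψ with λ = (B/ρ)². -/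

import Mathlib

open Real MeasureTheory Set

/-- With `ε ∈ {−1,+1}`, `ρ > 0`, `cos ρ ≠ 0`,
`e^ρ = −(1 + ε sin ρ)/cos ρ`, and the coefficients `a₁,…,a₄` and singular
functions `φ, ψ` as in the paper, one has `γ φ = (B/ρ)² ψ` on `[0,B]`:
`∫₀^B max(x−ξ,0) φ(x) dx = (B/ρ)² ψ(ξ)` for every `ξ ∈ [0,B]`. -/
theorem stmt_17 (B : ℝ) (hB : 0 < B) (ε : ℝ) (hε : ε = 1 ∨ ε = -1)
    (ρ : ℝ) (hρ : 0 < ρ) (hcos : cos ρ ≠ 0)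
    (hfix : exp ρ = -(1 + ε * sin ρ) / cos ρ)
    (a₁ a₂ a₃ a₄ : ℝ)
    (ha₁ : a₁ = (1 / Real.sqrt B) * (ε / (exp ρ + ε)))
    (ha₂ : a₂ = (1 / Real.sqrt B) * (1 / (1 + ε * exp (-ρ))))
    (ha₃ : a₃ = -(1 / Real.sqrt B))
    (ha₄ : a₄ = (1 / Real.sqrt B) * ((1 - ε * exp (-ρ)) / (1 + ε * exp (-ρ))))
    (φ ψ : ℝ → ℝ)
    (hφ : ∀ ξ, φ ξ = a₁ * exp (ρ * ξ / B) + a₂ * exp (-(ρ * ξ / B))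
        + a₃ * cos (ρ * ξ / B) + a₄ * sin (ρ * ξ / B))
    (hψ : ∀ ξ, ψ ξ = a₁ * exp (ρ * ξ / B) + a₂ * exp (-(ρ * ξ / B))
        - a₃ * cos (ρ * ξ / B) - a₄ * sin (ρ * ξ / B)) :
    ∀ ξ ∈ Icc (0:ℝ) B,
      (∫ x in (0:ℝ)..B, max (x - ξ) 0 * φ x) = (B / ρ) ^ 2 * ψ ξ := by
  intro ξ hξ
  have hBne : B ≠ 0 := ne_of_gt hB
  have hρne : ρ ≠ 0 := ne_of_gt hρ
  have hsB : Real.sqrt B ≠ 0 := ne_of_gt (Real.sqrt_pos.mpr hB)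
  have hEne : exp ρ ≠ 0 := exp_ne_zero ρ
  have hexpneg : exp (-ρ) = (exp ρ)⁻¹ := by rw [exp_neg]
  have hε2 : ε ^ 2 = 1 := by rcases hε with h | h <;> rw [h] <;> norm_num
  have hEε : exp ρ + ε ≠ 0 := by
    rcases hε with h | h
    · rw [h]; positivity
    · rw [h]
      have h1 : (1:ℝ) < exp ρ := by
        rw [← Real.exp_zero]; exact exp_lt_exp.mpr hρ
      intro hcon; linarith
  have hden2 : 1 + ε * exp (-ρ) ≠ 0 := by
    rw [hexpneg, show (1:ℝ) + ε * (exp ρ)⁻¹ = (exp ρ)⁻¹ * (exp ρ + ε) by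
      field_simp]
    exact mul_ne_zero (inv_ne_zero hEne) hEε
  have hEc : exp ρ * cos ρ = -(1 + ε * sin ρ) := by
    rw [hfix]; field_simp
  -- key identity
  have hK : ε * exp ρ - exp ρ * sin ρ + ε * cos ρ = 0 := by
    have hsc : sin ρ ^ 2 + cos ρ ^ 2 = 1 := sin_sq_add_cos_sq ρ
    have h0 : (ε * exp ρ - exp ρ * sin ρ + ε * cos ρ) * cos ρ = 0 := by
      linear_combination (ε - sin ρ) * hEc + ε * hsc - sin ρ * hε2
    rcases mul_eq_zero.mp h0 with h | h
    · exact h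
    · exact absurd h hcos
  have hN : ε * exp ρ + 1 + (exp ρ + ε) * cos ρ - (exp ρ - ε) * sin ρ = 0 := by
    linear_combination hK + hEc
  have hN' : ε * exp ρ - 1 - (exp ρ + ε) * sin ρ - (exp ρ - ε) * cos ρ = 0 := by
    linear_combination hK - hEc
  -- simplified coefficient forms
  have ha₂' : a₂ = (1 / Real.sqrt B) * (exp ρ / (exp ρ + ε)) := by
    rw [ha₂, hexpneg]
    field_simp
  have hden2' : 1 + ε * (exp ρ)⁻¹ ≠ 0 := by rw [← hexpneg]; exact hden2
  have ha₄' : a₄ = (1 / Real.sqrt B) * ((exp ρ - ε) / (exp ρ + ε)) := by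
    rw [ha₄, hexpneg]
    congr 1
    rw [div_eq_div_iff hden2' hEε]
    field_simp
  -- boundary vanishing at B
  have hcoeff : a₁ * exp ρ + a₂ * exp (-ρ) - a₃ * cos ρ - a₄ * sin ρ = 0 := by
    have heq : a₁ * exp ρ + a₂ * exp (-ρ) - a₃ * cos ρ - a₄ * sin ρ
        = (1 / (Real.sqrt B * (exp ρ + ε)))
          * (ε * exp ρ + 1 + (exp ρ + ε) * cos ρ - (exp ρ - ε) * sin ρ) := by
      rw [ha₁, ha₂', ha₃, ha₄', hexpneg]
      field_simp
      ring
    rw [heq, hN, mul_zero]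
  have hcoeff' : a₁ * exp ρ - a₂ * exp (-ρ) + a₃ * sin ρ - a₄ * cos ρ = 0 := by
    have heq : a₁ * exp ρ - a₂ * exp (-ρ) + a₃ * sin ρ - a₄ * cos ρ
        = (1 / (Real.sqrt B * (exp ρ + ε)))
          * (ε * exp ρ - 1 - (exp ρ + ε) * sin ρ - (exp ρ - ε) * cos ρ) := by
      rw [ha₁, ha₂', ha₃, ha₄', hexpneg]
      field_simp
      ring
    rw [heq, hN', mul_zero]
  -- antiderivatives
  set Φ : ℝ → ℝ := fun x => (B / ρ) ^ 2 *
    (a₁ * exp (ρ * x / B) + a₂ * exp (-(ρ * x / B)) - a₃ * cos (ρ * x / B)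
      - a₄ * sin (ρ * x / B)) with hΦdef
  set Φ' : ℝ → ℝ := fun x => (B / ρ) *
    (a₁ * exp (ρ * x / B) - a₂ * exp (-(ρ * x / B)) + a₃ * sin (ρ * x / B)
      - a₄ * cos (ρ * x / B)) with hΦ'def
  have hlin : ∀ x : ℝ, HasDerivAt (fun y : ℝ => ρ * y / B) (ρ / B) x := by
    intro x
    have : HasDerivAt (fun y : ℝ => (ρ / B) * y) (ρ / B) x := by
      simpa using (hasDerivAt_id x).const_mul (ρ / B)
    convert this using 2 with y
    ring
  have hΦd : ∀ x, HasDerivAt Φ (Φ' x) x := by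
    intro x
    have h := ((((hlin x).exp.const_mul a₁).add
        (((hlin x).neg.exp.const_mul a₂))).sub
        (((hlin x).cos.const_mul a₃))).sub
        (((hlin x).sin.const_mul a₄)) |>.const_mul ((B / ρ) ^ 2)
    refine h.congr_deriv ?_
    simp only [hΦ'def]
    simp only [Pi.neg_apply]
    field_simp
    ring
  have hΦ'd : ∀ x, HasDerivAt Φ' (φ x) x := by
    intro x
    have h := ((((hlin x).exp.const_mul a₁).sub
        (((hlin x).neg.exp.const_mul a₂))).add
        (((hlin x).sin.const_mul a₃))).sub
        (((hlin x).cos.const_mul a₄)) |>.const_mul (B / ρ)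
    refine h.congr_deriv ?_
    rw [hφ x]
    simp only [Pi.neg_apply]
    field_simp
    ring
  have hρB : ρ * B / B = ρ := by field_simp
  have hΦB : Φ B = 0 := by
    simp only [hΦdef, hρB]
    rw [hcoeff, mul_zero]
  have hΦ'B : Φ' B = 0 := by
    simp only [hΦ'def, hρB]
    rw [hcoeff', mul_zero]
  have hΦψ : Φ ξ = (B / ρ) ^ 2 * ψ ξ := by
    simp only [hΦdef]
    rw [hψ ξ]
  -- continuity
  have hφc : Continuous φ := by
    have hfe : φ = fun x => a₁ * exp (ρ * x / B) + a₂ * exp (-(ρ * x / B))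
        + a₃ * cos (ρ * x / B) + a₄ * sin (ρ * x / B) := funext hφ
    rw [hfe]; fun_prop
  have hmaxc : Continuous fun x : ℝ => max (x - ξ) 0 * φ x :=
    (((continuous_id.sub continuous_const).max continuous_const).mul hφc)
  -- split integral
  have hsplit : (∫ x in (0:ℝ)..B, max (x - ξ) 0 * φ x)
      = (∫ x in (0:ℝ)..ξ, max (x - ξ) 0 * φ x)
      + (∫ x in ξ..B, max (x - ξ) 0 * φ x) := by
    rw [intervalIntegral.integral_add_adjacent_intervals
      (hmaxc.intervalIntegrable 0 ξ) (hmaxc.intervalIntegrable ξ B)]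
  have hfirst : (∫ x in (0:ℝ)..ξ, max (x - ξ) 0 * φ x) = 0 := by
    rw [intervalIntegral.integral_congr (g := fun _ => (0:ℝ))]
    · simp
    · intro x hx
      rw [uIcc_of_le hξ.1] at hx
      have hle : x - ξ ≤ 0 := by linarith [hx.2]
      simp [max_eq_right hle]
  have hsecond : (∫ x in ξ..B, max (x - ξ) 0 * φ x)
      = (∫ x in ξ..B, (x - ξ) * φ x) := by
    apply intervalIntegral.integral_congr
    intro x hx
    rw [uIcc_of_le hξ.2] at hx
    have hle : 0 ≤ x - ξ := by linarith [hx.1]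
    simp [max_eq_left hle]
  -- FTC on G x = (x - ξ) * Φ' x - Φ x
  set G : ℝ → ℝ := fun x => (x - ξ) * Φ' x - Φ x with hG
  have hGd : ∀ x ∈ uIcc ξ B, HasDerivAt G ((x - ξ) * φ x) x := by
    intro x _
    have h := (((hasDerivAt_id x).sub_const ξ).mul (hΦ'd x)).sub (hΦd x)
    refine h.congr_deriv ?_
    simp only [id_eq]
    ring
  have hftc : (∫ x in ξ..B, (x - ξ) * φ x) = G B - G ξ := by
    apply intervalIntegral.integral_eq_sub_of_hasDerivAt hGd
    exact ((continuous_id.sub continuous_const).mul hφc).intervalIntegrable ξ B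
  rw [hsplit, hfirst, hsecond, hftc]
  simp only [hG]
  rw [hΦB, hΦ'B, hΦψ]
  ring
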